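/- arXiv:2401.13906 — 4 statements merged into one kernel-verified Lean document; each statement's English description precedes it below -/
import Mathlib

section
/- Let k ≥ 1 be a natural number and let a_1, …, a_k and b be rational numbers. Suppose every sum of the form (±a_1 ± a_2 ± ⋯ ± a_k)/2 + kb/2 (over all 2^k sign choices) is equal to 0 or 1, with both values attained. Then, up to reordering and swapping signs of the a_i, we have a_1 = 1, a_2 = ⋯ = a_k = 0, and b = 1/k. -/
set_option maxHeartbeats 2000000

/-- Lemma `eca-2`, case (1).
Let `k ≥ 1`, `a : Fin k → ℚ`, `b : ℚ`.  If every signed sum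
`(∑ i, ε i * a i)/2 + k*b/2` over sign choices `ε i ∈ {1, -1}` equals `0` or `1`,
with both values attained, then up to reordering and swapping signs we have
`a = (1,0,…,0)` and `b = 1/k`. -/
theorem stmt_2 (k : ℕ) (hk : 1 ≤ k) (a : Fin k → ℚ) (b : ℚ)
    (hval : ∀ ε : Fin k → ℚ, (∀ i, ε i = 1 ∨ ε i = -1) →
      ((∑ i, ε i * a i) / 2 + (k : ℚ) * b / 2 = 0 ∨
       (∑ i, ε i * a i) / 2 + (k : ℚ) * b / 2 = 1))
    (h0 : ∃ ε : Fin k → ℚ, (∀ i, ε i = 1 ∨ ε i = -1) ∧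
      (∑ i, ε i * a i) / 2 + (k : ℚ) * b / 2 = 0)
    (h1 : ∃ ε : Fin k → ℚ, (∀ i, ε i = 1 ∨ ε i = -1) ∧
      (∑ i, ε i * a i) / 2 + (k : ℚ) * b / 2 = 1) :
    ∃ i₀ : Fin k, (a i₀ = 1 ∨ a i₀ = -1) ∧ (∀ i, i ≠ i₀ → a i = 0) ∧
      b = 1 / (k : ℚ) := by
  -- helper: sum after updating a sign function at one index
  have key : ∀ (ε : Fin k → ℚ) (i : Fin k) (v : ℚ),
      ∑ j, (Function.update ε i v) j * a j = (∑ j, ε j * a j) + (v - ε i) * a i := by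
    intro ε i v
    have h : ∀ j, (Function.update ε i v) j * a j
        = ε j * a j + (if i = j then (v - ε i) * a i else 0) := by
      intro j
      rcases eq_or_ne j i with rfl | h
      · simp [Function.update_self]; ring
      · simp [Function.update_of_ne h, (Ne.symm h)]
    rw [Finset.sum_congr rfl (fun j _ => h j), Finset.sum_add_distrib,
      Finset.sum_ite_eq]
    simp
  have upd_valid : ∀ (ε : Fin k → ℚ), (∀ i, ε i = 1 ∨ ε i = -1) →
      ∀ (i : Fin k), (∀ j, (Function.update ε i (-1)) j = 1 ∨
        (Function.update ε i (-1)) j = -1) := by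
    intro ε hε i j
    rcases eq_or_ne j i with rfl | h
    · simp [Function.update_self]
    · simp [Function.update_of_ne h]; exact hε j
  set ε1 : Fin k → ℚ := fun _ => 1 with hε1def
  have hε1 : ∀ i, ε1 i = 1 ∨ ε1 i = -1 := fun i => Or.inl rfl
  set S : ℚ := ∑ j, a j with hS
  have hsum1 : ∑ j, ε1 j * a j = S := by simp [hε1def, hS]
  -- every a i is in {0, 1, -1}
  have hsmall : ∀ i, a i = 0 ∨ a i = 1 ∨ a i = -1 := by
    intro i
    have V1 := hval ε1 hε1
    have V2 := hval (Function.update ε1 i (-1)) (upd_valid ε1 hε1 i)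
    rw [key ε1 i (-1), hsum1] at V2
    rw [hsum1] at V1
    simp only [hε1def] at V2
    rcases V1 with V1 | V1 <;> rcases V2 with V2 | V2
    · left; linarith
    · right; right; linarith
    · right; left; linarith
    · left; linarith
  -- there is a nonzero index
  have hne : ∃ i₀ : Fin k, a i₀ ≠ 0 := by
    by_contra h
    push_neg at h
    obtain ⟨ε, hε, he0⟩ := h0
    obtain ⟨ε', hε', he1⟩ := h1
    have s0 : ∑ i, ε i * a i = 0 :=
      Finset.sum_eq_zero (fun i _ => by rw [h i, mul_zero])
    have s1 : ∑ i, ε' i * a i = 0 :=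
      Finset.sum_eq_zero (fun i _ => by rw [h i, mul_zero])
    rw [s0] at he0; rw [s1] at he1
    linarith
  obtain ⟨i₀, hi₀⟩ := hne
  have hi₀cases : a i₀ = 1 ∨ a i₀ = -1 := by
    rcases hsmall i₀ with h | h | h
    · exact absurd h hi₀
    · exact Or.inl h
    · exact Or.inr h
  -- all other entries are zero
  have hzero : ∀ i, i ≠ i₀ → a i = 0 := by
    intro i hii
    by_contra hai
    have hicases : a i = 1 ∨ a i = -1 := by
      rcases hsmall i with h | h | h
      · exact absurd h hai
      · exact Or.inl h
      · exact Or.inr h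
    have V1 := hval ε1 hε1
    have V2 := hval (Function.update ε1 i₀ (-1)) (upd_valid ε1 hε1 i₀)
    have V3 := hval (Function.update ε1 i (-1)) (upd_valid ε1 hε1 i)
    have V4 := hval (Function.update (Function.update ε1 i₀ (-1)) i (-1))
      (upd_valid _ (upd_valid ε1 hε1 i₀) i)
    rw [hsum1] at V1
    rw [key ε1 i₀ (-1), hsum1] at V2
    rw [key ε1 i (-1), hsum1] at V3
    rw [key (Function.update ε1 i₀ (-1)) i (-1), key ε1 i₀ (-1), hsum1,
      Function.update_of_ne hii] at V4
    simp only [hε1def] at V2 V3 V4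
    rcases hi₀cases with h₀ | h₀ <;> rcases hicases with h₁ | h₁ <;>
      rw [h₀] at V2 V4 <;> rw [h₁] at V3 V4 <;>
      rcases V1 with V1 | V1 <;> rcases V2 with V2 | V2 <;>
      rcases V3 with V3 | V3 <;> rcases V4 with V4 | V4 <;> linarith
  -- compute b
  obtain ⟨ε, hε, he0⟩ := h0
  obtain ⟨ε', hε', he1⟩ := h1
  have s0 : ∑ j, ε j * a j = ε i₀ * a i₀ :=
    Finset.sum_eq_single i₀ (fun j _ hj => by rw [hzero j hj, mul_zero])
      (fun h => absurd (Finset.mem_univ i₀) h)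
  have s1 : ∑ j, ε' j * a j = ε' i₀ * a i₀ :=
    Finset.sum_eq_single i₀ (fun j _ hj => by rw [hzero j hj, mul_zero])
      (fun h => absurd (Finset.mem_univ i₀) h)
  rw [s0] at he0; rw [s1] at he1
  have hkb : (k : ℚ) * b = 1 := by
    rcases hε i₀ with h | h <;> rcases hε' i₀ with h' | h' <;>
      rw [h] at he0 <;> rw [h'] at he1 <;>
      rcases hi₀cases with h₀ | h₀ <;> rw [h₀] at he0 he1 <;> linarith
  have hk0 : (k : ℚ) ≠ 0 := by
    have : (0 : ℚ) < k := by exact_mod_cast hk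
    linarith
  refine ⟨i₀, hi₀cases, hzero, ?_⟩
  field_simp
  linarith
end

section
/- Let k > 4 be a natural number and let a_1, …, a_k and b be rational numbers. Suppose that all sums of the form (±a_1 ± ⋯ ± a_k)/2 + kb/2 with an even number of minus signs are equal to 0 or 1, with both values attained. Then, up to reordering and swapping signs of the a_i, we have a_1 = 1, a_2 = ⋯ = a_k = 0, and b = 1/k. -/
/-- Lemma `eca-2`, case (2).
Let `k > 4`, `a : Fin k → ℚ`, `b : ℚ`.  If every signed sum
`(∑ i, ε i * a i)/2 + k*b/2` over sign choices `ε i ∈ {1, -1}` with an even number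
of minus signs equals `0` or `1`, with both values attained among such sign choices,
then up to reordering and swapping signs we have `a = (1,0,…,0)` and `b = 1/k`. -/
theorem stmt_3 (k : ℕ) (hk : 4 < k) (a : Fin k → ℚ) (b : ℚ)
    (hval : ∀ ε : Fin k → ℚ, (∀ i, ε i = 1 ∨ ε i = -1) →
      Even (Finset.univ.filter (fun i => ε i = -1)).card →
      ((∑ i, ε i * a i) / 2 + (k : ℚ) * b / 2 = 0 ∨
       (∑ i, ε i * a i) / 2 + (k : ℚ) * b / 2 = 1))
    (h0 : ∃ ε : Fin k → ℚ, (∀ i, ε i = 1 ∨ ε i = -1) ∧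
      Even (Finset.univ.filter (fun i => ε i = -1)).card ∧
      (∑ i, ε i * a i) / 2 + (k : ℚ) * b / 2 = 0)
    (h1 : ∃ ε : Fin k → ℚ, (∀ i, ε i = 1 ∨ ε i = -1) ∧
      Even (Finset.univ.filter (fun i => ε i = -1)).card ∧
      (∑ i, ε i * a i) / 2 + (k : ℚ) * b / 2 = 1) :
    ∃ i₀ : Fin k, (a i₀ = 1 ∨ a i₀ = -1) ∧ (∀ i, i ≠ i₀ → a i = 0) ∧
      b = 1 / (k : ℚ) := by
  classical
  obtain ⟨ε₀, hε₀, hev₀, hsum₀⟩ := h0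
  obtain ⟨ε₁, hε₁, hev₁, hsum₁⟩ := h1
  set S : ℚ := (∑ i, a i) / 2 + (k : ℚ) * b / 2 with hSdef
  -- values over even subsets
  have val : ∀ T : Finset (Fin k), Even T.card →
      S - ∑ i ∈ T, a i = 0 ∨ S - ∑ i ∈ T, a i = 1 := by
    intro T hT
    have hfe : Finset.univ.filter (fun i => (if i ∈ T then (-1:ℚ) else 1) = -1) = T := by
      ext i
      by_cases h : i ∈ T <;> simp [h] <;> norm_num
    have hsum : ∑ i, (if i ∈ T then (-1:ℚ) else 1) * a i
        = (∑ i, a i) - 2 * ∑ i ∈ T, a i := by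
      have hcong : ∀ i ∈ Finset.univ, (if i ∈ T then (-1:ℚ) else 1) * a i
          = a i - (if i ∈ T then 2 * a i else 0) := by
        intro i _; split_ifs <;> ring
      rw [Finset.sum_congr rfl hcong, Finset.sum_sub_distrib, Finset.sum_ite_mem,
        Finset.univ_inter, ← Finset.mul_sum]
    have h := hval (fun i => if i ∈ T then (-1:ℚ) else 1)
      (fun i => by by_cases h : i ∈ T <;> simp [h]) (by rw [hfe]; exact hT)
    rw [hsum] at h
    rcases h with h | h
    · left; rw [hSdef]; linarith
    · right; rw [hSdef]; linarith
  have hS01 : S = 0 ∨ S = 1 := by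
    have := val ∅ (by simp)
    simpa using this
  set u : ℚ := 2 * S - 1 with hudef
  have hu1 : u = 1 ∨ u = -1 := by
    rcases hS01 with h | h
    · right; rw [hudef, h]; ring
    · left; rw [hudef, h]; ring
  have hune : u ≠ 0 := by rcases hu1 with h | h <;> rw [h] <;> norm_num
  -- pair values
  have pair : ∀ i j : Fin k, i ≠ j → a i + a j = 0 ∨ a i + a j = u := by
    intro i j hij
    have h := val {i, j} (by rw [Finset.card_pair hij]; exact ⟨1, rfl⟩)
    rw [Finset.sum_pair hij] at h
    rcases hS01 with hS | hS <;> rcases h with h | h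
    · left; linarith
    · right; rw [hudef, hS]; linarith
    · right; rw [hudef, hS]; linarith
    · left; linarith
  -- quadruple values
  have quad : ∀ i j l m : Fin k, i ≠ j → i ≠ l → i ≠ m → j ≠ l → j ≠ m → l ≠ m →
      a i + a j + a l + a m = 0 ∨ a i + a j + a l + a m = u := by
    intro i j l m hij hil him hjl hjm hlm
    have hc : ({i, j, l, m} : Finset (Fin k)).card = 4 := by
      rw [Finset.card_insert_of_notMem (by simp [hij, hil, him]),
        Finset.card_insert_of_notMem (by simp [hjl, hjm]), Finset.card_pair hlm]
    have hs : ∑ x ∈ ({i, j, l, m} : Finset (Fin k)), a x = a i + a j + a l + a m := by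
      rw [Finset.sum_insert (by simp [hij, hil, him]),
        Finset.sum_insert (by simp [hjl, hjm]), Finset.sum_pair hlm]
      ring
    have h := val {i, j, l, m} (by rw [hc]; exact ⟨2, rfl⟩)
    rw [hs] at h
    rcases hS01 with hS | hS <;> rcases h with h | h
    · left; linarith
    · right; rw [hudef, hS]; linarith
    · right; rw [hudef, hS]; linarith
    · left; linarith
  -- no two disjoint heavy pairs
  have nodisj : ∀ i j l m : Fin k, i ≠ j → i ≠ l → i ≠ m → j ≠ l → j ≠ m → l ≠ m →
      a i + a j = u → a l + a m ≠ u := by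
    intro i j l m hij hil him hjl hjm hlm h1 h2
    rcases quad i j l m hij hil him hjl hjm hlm with h | h
    · rcases hu1 with hu | hu <;> rw [hu] at h1 h2 <;> linarith
    · rcases hu1 with hu | hu <;> rw [hu] at h1 h2 h <;> linarith
  -- picking two fresh indices
  have pick2 : ∀ s : Finset (Fin k), s.card + 2 ≤ k →
      ∃ p q : Fin k, p ≠ q ∧ p ∉ s ∧ q ∉ s := by
    intro s hs
    have hcard : 1 < (Finset.univ \ s).card := by
      rw [Finset.card_sdiff_of_subset (Finset.subset_univ s), Finset.card_univ, Fintype.card_fin]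
      omega
    obtain ⟨p, hp, q, hq, hpq⟩ := Finset.one_lt_card.mp hcard
    exact ⟨p, q, hpq, (Finset.mem_sdiff.mp hp).2, (Finset.mem_sdiff.mp hq).2⟩
  -- existence of a heavy pair
  have hex : ∃ i j : Fin k, i ≠ j ∧ a i + a j = u := by
    by_contra hcon
    push_neg at hcon
    have hlight : ∀ i j : Fin k, i ≠ j → a i + a j = 0 := fun i j h =>
      (pair i j h).resolve_right (hcon i j h)
    have hzero : ∀ i, a i = 0 := by
      intro i
      obtain ⟨p, q, hpq, hp, hq⟩ := pick2 {i} (by rw [Finset.card_singleton]; omega)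
      simp only [Finset.mem_singleton] at hp hq
      have h1 := hlight i p (Ne.symm hp)
      have h2 := hlight i q (Ne.symm hq)
      have h3 := hlight p q hpq
      linarith
    have s0 : ∑ i, ε₀ i * a i = 0 := Finset.sum_eq_zero fun i _ => by
      rw [hzero i, mul_zero]
    have s1 : ∑ i, ε₁ i * a i = 0 := Finset.sum_eq_zero fun i _ => by
      rw [hzero i, mul_zero]
    rw [s0] at hsum₀
    rw [s1] at hsum₁
    linarith
  obtain ⟨i, j, hij, hijh⟩ := hex
  -- star structure: one of i, j covers all heavy pairs
  have hstar : (∀ p q, p ≠ q → p ≠ i → q ≠ i → a p + a q = 0) ∨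
      (∀ p q, p ≠ q → p ≠ j → q ≠ j → a p + a q = 0) := by
    by_contra hcon
    push_neg at hcon
    obtain ⟨⟨p, q, hpq, hpi, hqi, hpqne⟩, ⟨r, s, hrs, hrj, hsj, hrsne⟩⟩ := hcon
    have hpqh : a p + a q = u := (pair p q hpq).resolve_left hpqne
    have hrsh : a r + a s = u := (pair r s hrs).resolve_left hrsne
    have hjpq : p = j ∨ q = j := by
      by_contra hc
      push_neg at hc
      exact nodisj i j p q hij (Ne.symm hpi) (Ne.symm hqi) (Ne.symm hc.1) (Ne.symm hc.2)
        hpq hijh hpqh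
    obtain ⟨p', hp'i, hp'j, hp'h⟩ : ∃ p', p' ≠ i ∧ p' ≠ j ∧ a p' + a j = u := by
      rcases hjpq with h | h
      · subst h
        exact ⟨q, hqi, Ne.symm hpq, by linarith⟩
      · subst h
        exact ⟨p, hpi, hpq, by linarith⟩
    have hirs : r = i ∨ s = i := by
      by_contra hc
      push_neg at hc
      exact nodisj i j r s hij (Ne.symm hc.1) (Ne.symm hc.2) (Ne.symm hrj) (Ne.symm hsj)
        hrs hijh hrsh
    obtain ⟨r', hr'i, hr'j, hr'h⟩ : ∃ r', r' ≠ i ∧ r' ≠ j ∧ a r' + a i = u := by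
      rcases hirs with h | h
      · subst h
        exact ⟨s, Ne.symm hrs, hsj, by linarith⟩
      · subst h
        exact ⟨r, hrs, hrj, by linarith⟩
    have hpr : p' = r' := by
      by_contra hc
      exact nodisj p' j r' i hp'j hc hp'i (Ne.symm hr'j) (Ne.symm hij) hr'i hp'h hr'h
    subst hpr
    -- triangle i, j, p' all heavy; pick two fresh indices
    have hc3 : ({i, j, p'} : Finset (Fin k)).card = 3 := by
      rw [Finset.card_insert_of_notMem (by simp [hij, Ne.symm hp'i]),
        Finset.card_pair (Ne.symm hp'j)]
    obtain ⟨x, y, hxy, hx, hy⟩ := pick2 {i, j, p'} (by rw [hc3]; omega)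
    simp only [Finset.mem_insert, Finset.mem_singleton] at hx hy
    push_neg at hx hy
    obtain ⟨hxi, hxj, hxp⟩ := hx
    obtain ⟨hyi, hyj, hyp⟩ := hy
    have lix : a i + a x = 0 := (pair i x (Ne.symm hxi)).resolve_right
      (nodisj p' j i x hp'j hp'i (Ne.symm hxp) (Ne.symm hij) (Ne.symm hxj) (Ne.symm hxi) hp'h)
    have liy : a i + a y = 0 := (pair i y (Ne.symm hyi)).resolve_right
      (nodisj p' j i y hp'j hp'i (Ne.symm hyp) (Ne.symm hij) (Ne.symm hyj) (Ne.symm hyi) hp'h)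
    have lxy : a x + a y = 0 := (pair x y hxy).resolve_right
      (nodisj i j x y hij (Ne.symm hxi) (Ne.symm hyi) (Ne.symm hxj) (Ne.symm hyj) hxy hijh)
    have ljx : a j + a x = 0 := (pair j x (Ne.symm hxj)).resolve_right
      (nodisj p' i j x hp'i hp'j (Ne.symm hxp) hij (Ne.symm hxi) (Ne.symm hxj) hr'h)
    exact hune (by linarith)
  -- the main construction
  have main : ∀ i₀ j₀ : Fin k, i₀ ≠ j₀ → a i₀ + a j₀ = u →
      (∀ p q, p ≠ q → p ≠ i₀ → q ≠ i₀ → a p + a q = 0) →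
      ∃ i₀ : Fin k, (a i₀ = 1 ∨ a i₀ = -1) ∧ (∀ i, i ≠ i₀ → a i = 0) ∧ b = 1 / (k : ℚ) := by
    intro i₀ j₀ hij₀ hh hl
    have hz : ∀ m, m ≠ i₀ → a m = 0 := by
      intro m hm
      obtain ⟨x, y, hxy, hx, hy⟩ := pick2 {i₀, m}
        (by
          have := Finset.card_insert_le i₀ ({m} : Finset (Fin k))
          rw [Finset.card_singleton] at this
          omega)
      simp only [Finset.mem_insert, Finset.mem_singleton] at hx hy
      push_neg at hx hy
      have h1 := hl m x (Ne.symm hx.2) hm hx.1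
      have h2 := hl m y (Ne.symm hy.2) hm hy.1
      have h3 := hl x y hxy hx.1 hy.1
      linarith
    have hai : a i₀ = u := by
      have := hz j₀ (Ne.symm hij₀)
      linarith
    have hsumu : ∑ x, a x = u := by
      rw [← hai]
      exact Finset.sum_eq_single i₀ (fun c _ hc => hz c hc) (by simp)
    have h2 : (k : ℚ) * b = 1 := by
      have h3 : S = u / 2 + (k : ℚ) * b / 2 := by rw [hSdef, hsumu]
      rw [hudef] at h3
      linarith
    have hk0 : (k : ℚ) ≠ 0 := Nat.cast_ne_zero.mpr (by omega)
    have hb : b = 1 / (k : ℚ) := by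
      field_simp
      linear_combination h2
    exact ⟨i₀, by rw [hai]; exact hu1, hz, hb⟩
  rcases hstar with h | h
  · exact main i j hij hijh h
  · exact main j i (Ne.symm hij) (by linarith) h
end

section
/- Let F be a vector bundle on a smooth proper complex curve C of genus g, let V ⊆ F be a subbundle with c := rk F − rk V, and let μ be a rational number. Suppose (1) h⁰(C, F) − h⁰(C, V) = δ, (2) every graded piece N^i/N^{i−1} of the Harder–Narasimhan filtration of V has slope in [0, 2g−2], and (3) μ(F) ≥ μ. Then rk F · (2g − 1 − μ) ≥ c·g − δ. -/
/-- An abstract interface for vector bundles on a fixed smooth proper complex curve of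
genus `g`, recording the numerical invariants and standard facts used in the proof:
rank, degree, dimension of global sections, the subbundle relation, and the multiset
of slopes of the graded pieces of the Harder–Narasimhan filtration.  The fields
`h0_le_of_HN_slopes` (the bound `h⁰(V) ≤ rk V + deg(V)/2` for a bundle whose HN slopes
lie in `[0, 2g-2]`), `riemannRoch_lower` (`h⁰(F) ≥ deg F - (g-1) rk F`),
`deg_le_of_HN_slopes` (`deg E ≤ s · rk E` if all HN slopes are `≤ s`) and
`rk_mono` are true facts about bundles on curves. -/
structure CurveBundleTheory where
  /-- genus of the curve -/
  g : ℕ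
  /-- the collection of vector bundles on the curve -/
  Bundle : Type
  rk : Bundle → ℕ
  deg : Bundle → ℤ
  h0 : Bundle → ℕ
  /-- `Subbundle V F` means `V ⊆ F` is a subbundle -/
  Subbundle : Bundle → Bundle → Prop
  /-- slopes of the graded pieces of the Harder–Narasimhan filtration -/
  HNslopes : Bundle → Multiset ℚ
  h0_le_of_HN_slopes : ∀ V : Bundle,
    (∀ s ∈ HNslopes V, 0 ≤ s ∧ s ≤ 2 * (g : ℚ) - 2) →
    (h0 V : ℚ) ≤ (rk V : ℚ) + (deg V : ℚ) / 2
  riemannRoch_lower : ∀ F : Bundle,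
    (deg F : ℚ) - ((g : ℚ) - 1) * (rk F : ℚ) ≤ (h0 F : ℚ)
  deg_le_of_HN_slopes : ∀ (E : Bundle) (s : ℚ),
    (∀ s' ∈ HNslopes E, s' ≤ s) → (deg E : ℚ) ≤ s * (rk E : ℚ)
  rk_mono : ∀ V F : Bundle, Subbundle V F → rk V ≤ rk F

/-- The slope `μ(E) = deg E / rk E` of a bundle. -/
def CurveBundleTheory.slope (T : CurveBundleTheory) (E : T.Bundle) : ℚ :=
  (T.deg E : ℚ) / (T.rk E : ℚ)

/-- Lemma `ggg-criterion`.
Let `F` be a vector bundle on a smooth proper complex curve `C` of genus `g`,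
`V ⊆ F` a subbundle with `c = rk F - rk V`, and `μ` rational.  If
(1) `h⁰(F) - h⁰(V) = δ`, (2) every HN graded piece of `V` has slope in `[0, 2g-2]`,
and (3) `μ(F) ≥ μ`, then `rk F · (2g - 1 - μ) ≥ c·g - δ`. -/
theorem stmt_4 (T : CurveBundleTheory) (F V : T.Bundle)
    (hsub : T.Subbundle V F) (c : ℕ) (hc : c = T.rk F - T.rk V)
    (δ : ℤ) (μ : ℚ)
    (h1 : (T.h0 F : ℤ) - (T.h0 V : ℤ) = δ)
    (h2 : ∀ s ∈ T.HNslopes V, 0 ≤ s ∧ s ≤ 2 * (T.g : ℚ) - 2)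
    (h3 : μ ≤ T.slope F) :
    (c : ℚ) * (T.g : ℚ) - (δ : ℚ) ≤ (T.rk F : ℚ) * (2 * (T.g : ℚ) - 1 - μ) := by
  have hv : T.rk V ≤ T.rk F := T.rk_mono V F hsub
  have hcq : (c : ℚ) = (T.rk F : ℚ) - (T.rk V : ℚ) := by
    have : c + T.rk V = T.rk F := by omega
    push_cast [← this]; ring
  have hdegV : (T.deg V : ℚ) ≤ (2 * (T.g : ℚ) - 2) * (T.rk V : ℚ) :=
    T.deg_le_of_HN_slopes V _ (fun s hs => (h2 s hs).2)
  have hh0V : (T.h0 V : ℚ) ≤ (T.rk V : ℚ) + (T.deg V : ℚ) / 2 :=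
    T.h0_le_of_HN_slopes V h2
  have hRR : (T.deg F : ℚ) - ((T.g : ℚ) - 1) * (T.rk F : ℚ) ≤ (T.h0 F : ℚ) :=
    T.riemannRoch_lower F
  have h1q : (T.h0 F : ℚ) - (T.h0 V : ℚ) = (δ : ℚ) := by exact_mod_cast congrArg (Int.cast : ℤ → ℚ) h1
  rcases Nat.eq_zero_or_pos (T.rk F) with h0 | hpos
  · have hV0 : T.rk V = 0 := by omega
    have hc0 : c = 0 := by omega
    have hh0V0 : (T.h0 V : ℚ) ≤ 0 := by
      rw [hV0] at hh0V hdegV; push_cast at hh0V hdegV; linarith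
    have : (0:ℚ) ≤ (T.h0 F : ℚ) := by positivity
    rw [hc0, h0]; push_cast; nlinarith [h3, hcq]
  · have hr : (0:ℚ) < (T.rk F : ℚ) := by exact_mod_cast hpos
    have hμ : μ * (T.rk F : ℚ) ≤ (T.deg F : ℚ) := by
      have h3' : μ ≤ (T.deg F : ℚ) / (T.rk F : ℚ) := h3
      calc μ * (T.rk F : ℚ) ≤ ((T.deg F : ℚ) / (T.rk F : ℚ)) * (T.rk F : ℚ) := by
            exact mul_le_mul_of_nonneg_right h3' (le_of_lt hr)
        _ = (T.deg F : ℚ) := by field_simp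
    nlinarith [hμ, hRR, hh0V, hdegV, h1q, hcq]
end

section
/- Let a_1, …, a_ν be complex numbers with ν ≥ 3 such that at most two distinct values occur among them, in the following strong sense: for 1 < k < ν − 1, if every sum of exactly k of the a_i lies in a two-element set {0, 1}, then at most one index i has a_i different from the common value of the others. More precisely: if 1 < k < ν − 1 and every k-element subset sum of (a_1,…,a_ν) lies in {0,1}, then there exists an index i₀ such that a_i = a_j for all i, j ≠ i₀. -/
lemma stmt14_helper (ν k : ℕ) (hν : 3 ≤ ν) (hk1 : 1 < k) (hkν : k < ν - 1)
    (a : Fin ν → ℂ)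
    (hval : ∀ s : Finset (Fin ν), s.card = k →
      (∑ i ∈ s, a i) ∈ ({0, 1} : Set ℂ))
    (hdiff : ∀ i j : Fin ν, i ≠ j → a i = a j ∨ a i = a j + 1 ∨ a i = a j - 1)
    (p q : Fin ν) (hpq : a p = a q + 1) :
    ∃ i₀ : Fin ν, ∀ i j : Fin ν, i ≠ i₀ → j ≠ i₀ → a i = a j := by
  classical
  have hpq' : a p ≠ a q := by
    intro h; rw [h] at hpq; simpa using hpq
  -- classification: every value is a q or a p
  have hclass : ∀ i, a i = a q ∨ a i = a p := by
    intro i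
    by_cases hip : i = p
    · right; rw [hip]
    by_cases hiq : i = q
    · left; rw [hiq]
    rcases hdiff i p hip with h1 | h1 | h1
    · right; exact h1
    · rcases hdiff i q hiq with h2 | h2 | h2
      · exfalso; have : (2:ℂ) = 0 := by linear_combination h2 - h1 - hpq
        norm_num at this
      · exfalso; have : (1:ℂ) = 0 := by linear_combination h2 - h1 - hpq
        norm_num at this
      · exfalso; have : (3:ℂ) = 0 := by linear_combination h2 - h1 - hpq
        norm_num at this
    · left; linear_combination h1 + hpq
  set A : Finset (Fin ν) := Finset.univ.filter (fun i => a i = a p) with hA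
  set B : Finset (Fin ν) := Finset.univ.filter (fun i => ¬ a i = a p) with hB
  have hABcard : A.card + B.card = ν := by
    rw [hA, hB, Finset.card_filter_add_card_filter_not, Finset.card_univ,
      Fintype.card_fin]
  have hpA : p ∈ A := by simp [hA]
  have hqB : q ∈ B := by simp [hB]; exact fun h => hpq' h.symm
  have hBval : ∀ i ∈ B, a i = a q := by
    intro i hi
    simp only [hB, Finset.mem_filter] at hi
    rcases hclass i with h | h
    · exact h
    · exact absurd h hi.2
  have hAval : ∀ i ∈ A, a i = a p := by
    intro i hi
    simp only [hA, Finset.mem_filter] at hi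
    exact hi.2
  by_cases hA1 : A.card ≤ 1
  · -- A = {p}
    have hApsing : A = {p} := by
      have h1 : 1 ≤ A.card := Finset.card_pos.mpr ⟨p, hpA⟩
      have : A.card = 1 := le_antisymm hA1 h1
      obtain ⟨x, hx⟩ := Finset.card_eq_one.mp this
      rw [hx] at hpA; simp at hpA; rw [hx, hpA]
    refine ⟨p, fun i j hi hj => ?_⟩
    have hi' : a i = a q := by
      rcases hclass i with h | h
      · exact h
      · exfalso; apply hi
        have : i ∈ A := by simp [hA, h]
        rw [hApsing] at this; simpa using this
    have hj' : a j = a q := by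
      rcases hclass j with h | h
      · exact h
      · exfalso; apply hj
        have : j ∈ A := by simp [hA, h]
        rw [hApsing] at this; simpa using this
    rw [hi', hj']
  by_cases hB1 : B.card ≤ 1
  · have hBqsing : B = {q} := by
      have h1 : 1 ≤ B.card := Finset.card_pos.mpr ⟨q, hqB⟩
      have : B.card = 1 := le_antisymm hB1 h1
      obtain ⟨x, hx⟩ := Finset.card_eq_one.mp this
      rw [hx] at hqB; simp at hqB; rw [hx, hqB]
    refine ⟨q, fun i j hi hj => ?_⟩
    have hi' : a i = a p := by
      rcases hclass i with h | h
      · exfalso; apply hi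
        have : i ∈ B := by
          simp [hB]
          intro h'; rw [h] at h'; exact hpq' h'.symm
        rw [hBqsing] at this; simpa using this
      · exact h
    have hj' : a j = a p := by
      rcases hclass j with h | h
      · exfalso; apply hj
        have : j ∈ B := by
          simp [hB]
          intro h'; rw [h] at h'; exact hpq' h'.symm
        rw [hBqsing] at this; simpa using this
      · exact h
    rw [hi', hj']
  -- contradiction case
  exfalso
  push_neg at hA1 hB1
  set tB : ℕ := min k B.card with htB
  set tA : ℕ := k - tB with htA
  have h2tB : 2 ≤ tB := by omega
  have htAk : tA + tB = k := by omega
  have htA2 : tA + 2 ≤ A.card := by omega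
  have htBB : tB ≤ B.card := by omega
  obtain ⟨sA, hsA_sub, hsA_card⟩ := Finset.exists_subset_card_eq (s := A) (n := tA + 2) htA2
  obtain ⟨sB, hsB_sub, hsB_card⟩ := Finset.exists_subset_card_eq (s := B) (n := tB) htBB
  obtain ⟨sA', hsA'_sub, hsA'_card⟩ := Finset.exists_subset_card_eq (s := sA) (n := tA) (by omega)
  obtain ⟨sB', hsB'_sub, hsB'_card⟩ := Finset.exists_subset_card_eq (s := sB) (n := tB - 2) (by omega)
  have hdisjAB : Disjoint A B := by
    rw [Finset.disjoint_left]
    intro i hiA hiB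
    simp only [hA, hB, Finset.mem_filter] at hiA hiB
    exact hiB.2 hiA.2
  have hdisj1 : Disjoint sA' sB :=
    hdisjAB.mono (hsA'_sub.trans hsA_sub) hsB_sub
  have hdisj2 : Disjoint sA sB' :=
    hdisjAB.mono hsA_sub (hsB'_sub.trans hsB_sub)
  have sumA : ∀ (s : Finset (Fin ν)), s ⊆ A → ∑ i ∈ s, a i = (s.card : ℂ) * a p := by
    intro s hs
    calc ∑ i ∈ s, a i = ∑ _i ∈ s, a p :=
          Finset.sum_congr rfl (fun i hi => hAval i (hs hi))
      _ = s.card • a p := Finset.sum_const _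
      _ = (s.card : ℂ) * a p := nsmul_eq_mul _ _
  have sumB : ∀ (s : Finset (Fin ν)), s ⊆ B → ∑ i ∈ s, a i = (s.card : ℂ) * a q := by
    intro s hs
    calc ∑ i ∈ s, a i = ∑ _i ∈ s, a q :=
          Finset.sum_congr rfl (fun i hi => hBval i (hs hi))
      _ = s.card • a q := Finset.sum_const _
      _ = (s.card : ℂ) * a q := nsmul_eq_mul _ _
  have hS1 := hval (sA' ∪ sB) (by
    rw [Finset.card_union_of_disjoint hdisj1, hsA'_card, hsB_card]; omega)
  have hS2 := hval (sA ∪ sB') (by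
    rw [Finset.card_union_of_disjoint hdisj2, hsA_card, hsB'_card]; omega)
  rw [Finset.sum_union hdisj1, sumA sA' (hsA'_sub.trans hsA_sub),
    sumB sB hsB_sub, hsA'_card, hsB_card] at hS1
  rw [Finset.sum_union hdisj2, sumA sA hsA_sub,
    sumB sB' (hsB'_sub.trans hsB_sub), hsA_card, hsB'_card] at hS2
  have hcast : ((tB - 2 : ℕ) : ℂ) = (tB : ℂ) - 2 := by
    push_cast [Nat.cast_sub h2tB]; ring
  have hcast2 : ((tA + 2 : ℕ) : ℂ) = (tA : ℂ) + 2 := by push_cast; ring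
  rw [hcast, hcast2] at hS2
  simp only [Set.mem_insert_iff, Set.mem_singleton_iff] at hS1 hS2
  have key : ((tA:ℂ) + 2) * a p + ((tB:ℂ) - 2) * a q
      = (tA:ℂ) * a p + (tB:ℂ) * a q + 2 := by linear_combination 2 * hpq
  rcases hS2 with h2 | h2 <;> rcases hS1 with h1 | h1 <;>
    rw [h1, h2] at key <;> norm_num at key

/-- Let `a : Fin ν → ℂ` with `ν ≥ 3` and `1 < k < ν - 1`.  If every sum of exactly `k`
of the `a i` lies in `{0, 1}`, then there is an index `i₀` such that all the `a i`
with `i ≠ i₀` are equal to each other. -/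
theorem stmt_14 (ν k : ℕ) (hν : 3 ≤ ν) (hk1 : 1 < k) (hkν : k < ν - 1)
    (a : Fin ν → ℂ)
    (hval : ∀ s : Finset (Fin ν), s.card = k →
      (∑ i ∈ s, a i) ∈ ({0, 1} : Set ℂ)) :
    ∃ i₀ : Fin ν, ∀ i j : Fin ν, i ≠ i₀ → j ≠ i₀ → a i = a j := by
  classical
  have hdiff : ∀ i j : Fin ν, i ≠ j → a i = a j ∨ a i = a j + 1 ∨ a i = a j - 1 := by
    intro i j hij
    obtain ⟨s, hs_sub, hs_card⟩ := Finset.exists_subset_card_eq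
      (s := Finset.univ \ {i, j}) (n := k - 1) (by
        have hc2 : ({i, j} : Finset (Fin ν)).card = 2 := by
          rw [Finset.card_insert_of_notMem (by simp [hij]), Finset.card_singleton]
        rw [Finset.card_sdiff_of_subset (Finset.subset_univ _), hc2, Finset.card_univ,
          Fintype.card_fin]
        omega)
    have hi : i ∉ s := by
      intro h; have := hs_sub h; simp at this
    have hj : j ∉ s := by
      intro h; have := hs_sub h; simp at this
    have h1 := hval (insert i s) (by
      rw [Finset.card_insert_of_notMem hi, hs_card]; omega)
    have h2 := hval (insert j s) (by
      rw [Finset.card_insert_of_notMem hj, hs_card]; omega)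
    rw [Finset.sum_insert hi] at h1
    rw [Finset.sum_insert hj] at h2
    simp only [Set.mem_insert_iff, Set.mem_singleton_iff] at h1 h2
    rcases h1 with h1 | h1 <;> rcases h2 with h2 | h2
    · left; linear_combination h1 - h2
    · right; right; linear_combination h1 - h2
    · right; left; linear_combination h1 - h2
    · left; linear_combination h1 - h2
  by_cases hall : ∀ i j : Fin ν, a i = a j
  · exact ⟨⟨0, by omega⟩, fun i j _ _ => hall i j⟩
  push_neg at hall
  obtain ⟨p, q, hpq⟩ := hall
  have hne : p ≠ q := fun h => hpq (by rw [h])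
  rcases hdiff p q hne with h | h | h
  · exact absurd h hpq
  · exact stmt14_helper ν k hν hk1 hkν a hval hdiff p q h
  · exact stmt14_helper ν k hν hk1 hkν a hval hdiff q p
      (by linear_combination -h)
end
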